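/- If (M_n) has stationary increments and P(M_n = 0) ≤ C n^{-θ} for some θ with 1 < θ < 2 and all n ≥ 1, then E[R_n - R'_n] = O(n^{2-θ}), where R_n is the range up to time n and R'_n = 1 + sum_{k=0}^{n-1} 1_{{M_{k+j} ≠ M_k for all j ≥ 1}}. -/

import Mathlib

open MeasureTheory Finset

section Aux

lemma mvt_aux {p : ℝ} {a : ℝ} (ha : 0 ≤ a) (hcont : ContinuousOn (fun x : ℝ => x ^ p) (Set.Icc a (a+1))) :
    ∃ c ∈ Set.Ioo a (a+1), (a+1) ^ p - a ^ p = p * c ^ (p-1) := by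
  obtain ⟨c, hc, hceq⟩ := exists_hasDerivAt_eq_slope (fun x : ℝ => x ^ p) (fun x => p * x ^ (p-1))
    (by linarith) hcont (fun x hx => Real.hasDerivAt_rpow_const (Or.inl (by nlinarith [hx.1])))
  exact ⟨c, hc, by rw [hceq]; ring⟩

lemma L1 {q : ℝ} (hq : 0 < q) {a : ℝ} (ha : 1 ≤ a) :
    q * (a+1) ^ (-(q+1)) ≤ a ^ (-q) - (a+1) ^ (-q) := by
  obtain ⟨c, hc, hceq⟩ := mvt_aux (p := -q) (by linarith)
    (ContinuousOn.rpow_const continuousOn_id (fun x hx => Or.inl (by simp at hx ⊢; nlinarith [hx.1])))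
  have h1 : (0:ℝ) < c := by nlinarith [hc.1]
  have h2 : c ^ (-q-1) ≥ (a+1) ^ (-q-1) :=
    Real.rpow_le_rpow_of_nonpos h1 hc.2.le (by linarith)
  have h3 : a ^ (-q) - (a+1) ^ (-q) = q * c ^ (-q-1) := by nlinarith [hceq]
  rw [h3, show -(q+1) = -q-1 by ring]
  nlinarith

lemma L2 {p : ℝ} (hp0 : 0 < p) (hp1 : p < 1) {a : ℝ} (ha : 0 ≤ a) :
    p * (a+1) ^ (p-1) ≤ (a+1) ^ p - a ^ p := by
  obtain ⟨c, hc, hceq⟩ := mvt_aux (p := p) ha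
    (fun x hx => (Real.continuousAt_rpow_const x p (Or.inr hp0.le)).continuousWithinAt)
  have h1 : (0:ℝ) < c := lt_of_le_of_lt ha hc.1
  have h2 : (a+1) ^ (p-1) ≤ c ^ (p-1) :=
    Real.rpow_le_rpow_of_nonpos h1 hc.2.le (by linarith)
  rw [hceq]; nlinarith

lemma tail_bound {θ : ℝ} (hθ1 : 1 < θ) {m : ℕ} (hm : 1 ≤ m) (N : ℕ) :
    ∑ j ∈ range N, ((m+j+1 : ℕ) : ℝ) ^ (-θ) ≤ ((m:ℝ) ^ (1-θ)) / (θ-1) := by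
  have key : ∀ j ∈ range N, ((m+j+1 : ℕ) : ℝ) ^ (-θ)
      ≤ (((m+j:ℕ):ℝ) ^ (1-θ) - ((m+j+1:ℕ):ℝ) ^ (1-θ)) / (θ-1) := by
    intro j _
    have h := L1 (q := θ-1) (by linarith) (a := ((m+j:ℕ):ℝ))
      (by exact_mod_cast Nat.one_le_iff_ne_zero.mpr (by omega))
    have e1 : ((m+j:ℕ):ℝ) + 1 = ((m+j+1:ℕ):ℝ) := by push_cast; ring
    rw [e1, show -(θ-1+1) = -θ by ring, show -(θ-1) = 1-θ by ring] at h
    rw [le_div_iff₀ (by linarith)]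
    nlinarith
  calc ∑ j ∈ range N, ((m+j+1 : ℕ) : ℝ) ^ (-θ)
      ≤ ∑ j ∈ range N, (((m+j:ℕ):ℝ) ^ (1-θ) - ((m+j+1:ℕ):ℝ) ^ (1-θ)) / (θ-1) :=
        Finset.sum_le_sum key
    _ = (∑ j ∈ range N, (((m+j:ℕ):ℝ) ^ (1-θ) - ((m+(j+1):ℕ):ℝ) ^ (1-θ))) / (θ-1) := by
        rw [Finset.sum_div]; rfl
    _ = (((m:ℝ)) ^ (1-θ) - ((m+N:ℕ):ℝ) ^ (1-θ)) / (θ-1) := by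
        rw [Finset.sum_range_sub' (fun j => ((m+j:ℕ):ℝ) ^ (1-θ))]
        norm_num
    _ ≤ ((m:ℝ) ^ (1-θ)) / (θ-1) := by
        rw [div_le_div_iff_of_pos_right (by linarith)]
        nlinarith [Real.rpow_nonneg (Nat.cast_nonneg (m+N)) (1-θ)]

lemma sum_bound {θ : ℝ} (hθ1 : 1 < θ) (hθ2 : θ < 2) (n : ℕ) :
    ∑ m ∈ range n, ((m+1 : ℕ) : ℝ) ^ (1-θ) ≤ ((n:ℝ) ^ (2-θ)) / (2-θ) := by
  have key : ∀ m ∈ range n, ((m+1 : ℕ) : ℝ) ^ (1-θ)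
      ≤ (((m+1:ℕ):ℝ) ^ (2-θ) - ((m:ℕ):ℝ) ^ (2-θ)) / (2-θ) := by
    intro m _
    have h := L2 (p := 2-θ) (by linarith) (by linarith) (a := (m:ℝ)) (Nat.cast_nonneg m)
    have e1 : ((m:ℕ):ℝ) + 1 = ((m+1:ℕ):ℝ) := by push_cast; ring
    rw [e1, show 2-θ-1 = 1-θ by ring] at h
    rw [le_div_iff₀ (by linarith)]
    nlinarith
  calc ∑ m ∈ range n, ((m+1 : ℕ) : ℝ) ^ (1-θ)
      ≤ ∑ m ∈ range n, (((m+1:ℕ):ℝ) ^ (2-θ) - ((m:ℕ):ℝ) ^ (2-θ)) / (2-θ) :=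
        Finset.sum_le_sum key
    _ = (∑ m ∈ range n, (((m+1:ℕ):ℝ) ^ (2-θ) - ((m:ℕ):ℝ) ^ (2-θ))) / (2-θ) := by
        rw [Finset.sum_div]
    _ = (((n:ℕ):ℝ) ^ (2-θ) - ((0:ℕ):ℝ) ^ (2-θ)) / (2-θ) :=  by
        rw [Finset.sum_range_sub (fun m => ((m:ℕ):ℝ) ^ (2-θ))]
    _ = ((n:ℝ) ^ (2-θ)) / (2-θ) := by
        norm_num [Real.zero_rpow (show 2-θ ≠ 0 by linarith)]


open Classical in
lemma card_image_le {α : Type*} [DecidableEq α] (f : ℕ → α) (n : ℕ) :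
    ((Finset.range (n+1)).image f).card ≤
      1 + ∑ k ∈ Finset.range n, (if ∀ j, 1 ≤ j → k + j ≤ n → f (k+j) ≠ f k then 1 else 0) := by
  classical
  set F := (Finset.range (n+1)).filter
      (fun k => ∀ j, 1 ≤ j → k + j ≤ n → f (k+j) ≠ f k) with hF
  have hsurj : Set.SurjOn f ↑F ↑((Finset.range (n+1)).image f) := by
    intro y hy
    simp only [Finset.coe_image, Set.mem_image, Finset.mem_coe] at hy
    obtain ⟨k0, hk0, rfl⟩ := hy
    set P := (Finset.range (n+1)).filter (fun k => f k = f k0) with hP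
    have hne : P.Nonempty := ⟨k0, by simp [hP, hk0]⟩
    set k := P.max' hne with hk
    have hkP : k ∈ P := P.max'_mem hne
    simp only [hP, Finset.mem_filter] at hkP
    refine ⟨k, ?_, hkP.2⟩
    simp only [hF, Finset.coe_filter, Set.mem_setOf_eq, Finset.mem_filter]
    refine ⟨hkP.1, ?_⟩
    intro j hj1 hjn hcontra
    have hmem : k + j ∈ P := by
      simp only [hP, Finset.mem_filter, Finset.mem_range]
      exact ⟨by omega, by rw [hcontra, hkP.2]⟩
    have := P.le_max' _ hmem
    omega
  have h1 : ((Finset.range (n+1)).image f).card ≤ F.card :=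
    Finset.card_le_card_of_surjOn f hsurj
  have h2 : F.card = ∑ k ∈ Finset.range (n+1),
      (if ∀ j, 1 ≤ j → k + j ≤ n → f (k+j) ≠ f k then 1 else 0) := by
    rw [hF, Finset.card_filter]
  rw [Finset.sum_range_succ] at h2
  have h3 : (if ∀ j, 1 ≤ j → n + j ≤ n → f (n+j) ≠ f n then 1 else 0) = 1 := by
    rw [if_pos]; intro j hj1 hjn; omega
  omega

lemma meas_ret {d : ℕ} {Ω : Type*} [MeasurableSpace Ω] (μ : Measure Ω)
    (M : ℕ → Ω → (Fin d → ℤ)) (hmeas : ∀ n, Measurable (M n))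
    (hstat : ∀ k, Measure.map (fun ω => (fun j => M (k + j) ω - M k ω : ℕ → Fin d → ℤ)) μ
        = Measure.map (fun ω => (fun j => M j ω : ℕ → Fin d → ℤ)) μ)
    (hM0 : ∀ ω, M 0 ω = 0) (k i : ℕ) :
    μ {ω | M (k+i) ω = M k ω} = μ {ω | M i ω = 0} := by
  have hΦk : Measurable (fun ω => (fun j => M (k + j) ω - M k ω : ℕ → Fin d → ℤ)) :=
    measurable_pi_lambda _ (fun j => (hmeas (k+j)).sub (hmeas k))
  have hΦ : Measurable (fun ω => (fun j => M j ω : ℕ → Fin d → ℤ)) :=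
    measurable_pi_lambda _ (fun j => hmeas j)
  have hT : MeasurableSet {f : ℕ → Fin d → ℤ | f i = 0} :=
    (measurable_pi_apply i) (measurableSet_singleton 0)
  have h1 := congrArg (fun ν : Measure (ℕ → Fin d → ℤ) => ν {f | f i = 0}) (hstat k)
  simp only [Measure.map_apply hΦk hT, Measure.map_apply hΦ hT] at h1
  have e1 : (fun ω => (fun j => M (k + j) ω - M k ω : ℕ → Fin d → ℤ)) ⁻¹' {f | f i = 0}
      = {ω | M (k+i) ω = M k ω} := by
    ext ω; simp [sub_eq_zero]
  have e2 : (fun ω => (fun j => M j ω : ℕ → Fin d → ℤ)) ⁻¹' {f | f i = 0}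
      = {ω | M i ω = 0} := by
    ext ω; simp
  rw [e1, e2] at h1
  exact h1

lemma measSet_eq {d : ℕ} {Ω : Type*} [MeasurableSpace Ω]
    {M : ℕ → Ω → (Fin d → ℤ)} (hmeas : ∀ n, Measurable (M n)) (a b : ℕ) :
    MeasurableSet {ω | M a ω = M b ω} := by
  have : {ω | M a ω = M b ω} = (fun ω => M a ω - M b ω) ⁻¹' {0} := by
    ext ω; simp [sub_eq_zero]
  rw [this]; exact ((hmeas a).sub (hmeas b)) (measurableSet_singleton 0)

lemma measSet_S {d : ℕ} {Ω : Type*} [MeasurableSpace Ω]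
    {M : ℕ → Ω → (Fin d → ℤ)} (hmeas : ∀ n, Measurable (M n)) (k n : ℕ) :
    MeasurableSet {ω | ∀ j, 1 ≤ j → k + j ≤ n → M (k+j) ω ≠ M k ω} := by
  have : {ω | ∀ j, 1 ≤ j → k + j ≤ n → M (k+j) ω ≠ M k ω}
      = ⋂ j, ⋂ (_ : 1 ≤ j), ⋂ (_ : k + j ≤ n), {ω | M (k+j) ω = M k ω}ᶜ := by
    ext ω; simp [Set.mem_iInter]
  rw [this]
  exact MeasurableSet.iInter fun j => MeasurableSet.iInter fun _ =>
    MeasurableSet.iInter fun _ => (measSet_eq hmeas _ _).compl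

lemma measSet_S' {d : ℕ} {Ω : Type*} [MeasurableSpace Ω]
    {M : ℕ → Ω → (Fin d → ℤ)} (hmeas : ∀ n, Measurable (M n)) (k : ℕ) :
    MeasurableSet {ω | ∀ j, 1 ≤ j → M (k+j) ω ≠ M k ω} := by
  have : {ω | ∀ j, 1 ≤ j → M (k+j) ω ≠ M k ω}
      = ⋂ j, ⋂ (_ : 1 ≤ j), {ω | M (k+j) ω = M k ω}ᶜ := by
    ext ω; simp [Set.mem_iInter]
  rw [this]
  exact MeasurableSet.iInter fun j => MeasurableSet.iInter fun _ =>
    (measSet_eq hmeas _ _).compl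

lemma diff_bound {d : ℕ} {Ω : Type*} [MeasurableSpace Ω]
    (μ : Measure Ω) [IsProbabilityMeasure μ]
    (M : ℕ → Ω → (Fin d → ℤ)) (hmeas : ∀ n, Measurable (M n))
    (hM0 : ∀ ω, M 0 ω = 0)
    (hstat : ∀ k, Measure.map (fun ω => (fun j => M (k + j) ω - M k ω : ℕ → Fin d → ℤ)) μ
        = Measure.map (fun ω => (fun j => M j ω : ℕ → Fin d → ℤ)) μ)
    (θ C : ℝ) (hθ1 : 1 < θ) (hC : 0 < C)
    (hret : ∀ n : ℕ, 1 ≤ n → (μ {ω | M n ω = 0}).toReal ≤ C * (n : ℝ) ^ (-θ))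
    {n k : ℕ} (hk : k < n) :
    (μ {ω | ∀ j, 1 ≤ j → k + j ≤ n → M (k+j) ω ≠ M k ω}).toReal
      - (μ {ω | ∀ j, 1 ≤ j → M (k+j) ω ≠ M k ω}).toReal
      ≤ (C/(θ-1)) * ((n-k : ℕ) : ℝ) ^ (1-θ) := by
  set S : Set Ω := {ω | ∀ j, 1 ≤ j → k + j ≤ n → M (k+j) ω ≠ M k ω} with hSdef
  set S' : Set Ω := {ω | ∀ j, 1 ≤ j → M (k+j) ω ≠ M k ω} with hS'def
  set m : ℕ := n - k with hmdef
  have hm1 : 1 ≤ m := by omega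
  have hsub : S' ⊆ S := fun ω h j hj1 _ => h j hj1
  have hS'meas : MeasurableSet S' := measSet_S' hmeas k
  -- split the measure
  have hsplit : μ S' + μ (S \ S') = μ S := by
    rw [measure_add_diff hS'meas.nullMeasurableSet S, Set.union_eq_self_of_subset_left hsub]
  have htos : (μ S).toReal = (μ S').toReal + (μ (S \ S')).toReal := by
    rw [← hsplit, ENNReal.toReal_add (measure_ne_top μ _) (measure_ne_top μ _)]
  -- the diff is contained in a union of return events
  have hdiff : S \ S' ⊆ ⋃ j : ℕ, {ω | M (k + (m+j+1)) ω = M k ω} := by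
    rintro ω ⟨hωS, hωS'⟩
    rw [hS'def] at hωS'
    simp only [Set.mem_setOf_eq, not_forall] at hωS'
    obtain ⟨j0, hj01, hj0⟩ := hωS'
    have hj0eq : M (k + j0) ω = M k ω := not_not.mp hj0
    have hlarge : ¬ (k + j0 ≤ n) := fun hle => hωS j0 hj01 hle hj0eq
    refine Set.mem_iUnion.mpr ⟨j0 - m - 1, ?_⟩
    have : m + (j0 - m - 1) + 1 = j0 := by omega
    rw [this]
    exact hj0eq
  -- bound the measure of the union
  have hbound : μ (S \ S') ≤ ENNReal.ofReal ((C * ((m:ℝ) ^ (1-θ))) / (θ-1)) := by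
    refine (measure_mono hdiff).trans ((measure_iUnion_le _).trans ?_)
    have hterm : ∀ j : ℕ, μ {ω | M (k + (m+j+1)) ω = M k ω}
        ≤ ENNReal.ofReal (C * ((m+j+1 : ℕ) : ℝ) ^ (-θ)) := by
      intro j
      rw [meas_ret μ M hmeas hstat hM0 k (m+j+1)]
      rw [← ENNReal.ofReal_toReal (measure_ne_top μ {ω | M (m+j+1) ω = 0})]
      exact ENNReal.ofReal_le_ofReal (hret (m+j+1) (by omega))
    refine (ENNReal.tsum_le_tsum hterm).trans ?_
    refine tsum_le_of_sum_le' ?_ (fun s => ?_)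
    · exact zero_le
    obtain ⟨N, hN⟩ := s.exists_nat_subset_range
    refine le_trans (Finset.sum_le_sum_of_subset hN) ?_
    rw [← ENNReal.ofReal_sum_of_nonneg (fun i _ => by positivity)]
    apply ENNReal.ofReal_le_ofReal
    rw [← Finset.mul_sum, mul_div_assoc]
    exact mul_le_mul_of_nonneg_left (tail_bound hθ1 hm1 N) hC.le
  have hnn : 0 ≤ (C * ((m:ℝ) ^ (1-θ))) / (θ-1) := by
    apply div_nonneg _ (by linarith)
    exact mul_nonneg hC.le (Real.rpow_nonneg (Nat.cast_nonneg m) _)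
  have := ENNReal.toReal_le_of_le_ofReal hnn hbound
  rw [htos]
  have : (C/(θ-1)) * ((m : ℕ) : ℝ) ^ (1-θ) = (C * ((m:ℝ) ^ (1-θ))) / (θ-1) := by ring
  rw [this]
  linarith [ENNReal.toReal_le_of_le_ofReal hnn hbound]

end Aux

open MeasureTheory Finset Classical in
/-- if `(M_n)` has stationary increments and `P(M_n = 0) ≤ C n^{-θ}` with
`1 < θ < 2`, then `E[R_n - R'_n] = O(n^{2-θ})`. -/
theorem expectation_range_sub_bigO {d : ℕ} {Ω : Type*} [MeasurableSpace Ω]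
    (μ : Measure Ω) [IsProbabilityMeasure μ]
    (M : ℕ → Ω → (Fin d → ℤ)) (hmeas : ∀ n, Measurable (M n))
    (hM0 : ∀ ω, M 0 ω = 0)
    (hstat : ∀ k, Measure.map (fun ω => (fun j => M (k + j) ω - M k ω : ℕ → Fin d → ℤ)) μ
        = Measure.map (fun ω => (fun j => M j ω : ℕ → Fin d → ℤ)) μ)
    (θ C : ℝ) (hθ1 : 1 < θ) (hθ2 : θ < 2) (hC : 0 < C)
    (hret : ∀ n : ℕ, 1 ≤ n → (μ {ω | M n ω = 0}).toReal ≤ C * (n : ℝ) ^ (-θ)) :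
    ∃ C' : ℝ, ∀ n : ℕ, 1 ≤ n →
      ∫ ω, ((((Finset.range (n + 1)).image (fun k => M k ω)).card : ℝ)
          - (1 + ∑ k ∈ Finset.range n,
              (if ∀ j ≥ 1, M (k + j) ω ≠ M k ω then (1 : ℝ) else 0))) ∂μ
        ≤ C' * (n : ℝ) ^ (2 - θ) := by
  refine ⟨C / ((θ-1) * (2-θ)), fun n hn => ?_⟩
  have hC' : 0 < C / ((θ-1) * (2-θ)) := by
    apply div_pos hC; nlinarith
  have hrpos : (0:ℝ) ≤ (n:ℝ) ^ (2-θ) :=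
    Real.rpow_nonneg (Nat.cast_nonneg n) _
  set S : ℕ → Set Ω := fun k => {ω | ∀ j, 1 ≤ j → k + j ≤ n → M (k+j) ω ≠ M k ω} with hS
  set S' : ℕ → Set Ω := fun k => {ω | ∀ j, 1 ≤ j → M (k+j) ω ≠ M k ω} with hS'
  set f : Ω → ℝ := fun ω => ((((Finset.range (n + 1)).image (fun k => M k ω)).card : ℝ)
          - (1 + ∑ k ∈ Finset.range n,
              (if ∀ j ≥ 1, M (k + j) ω ≠ M k ω then (1 : ℝ) else 0))) with hf
  set g : Ω → ℝ := fun ω => ∑ k ∈ Finset.range n,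
      ((S k).indicator (fun _ => (1:ℝ)) ω - (S' k).indicator (fun _ => (1:ℝ)) ω) with hg
  -- the statement's `if` is the indicator of `S' k`
  have hiff : ∀ k ω, (if ∀ j ≥ 1, M (k + j) ω ≠ M k ω then (1:ℝ) else 0)
      = (S' k).indicator (fun _ => (1:ℝ)) ω := by
    intro k ω
    rw [Set.indicator_apply]
    congr 1
  -- pointwise bound f ≤ g
  have hfg : ∀ ω, f ω ≤ g ω := by
    intro ω
    have h1 := card_image_le (fun k => M k ω) n
    have h2 : ((((Finset.range (n + 1)).image (fun k => M k ω)).card : ℝ))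
        ≤ 1 + ∑ k ∈ Finset.range n, (S k).indicator (fun _ => (1:ℝ)) ω := by
      calc ((((Finset.range (n + 1)).image (fun k => M k ω)).card : ℝ))
          ≤ ((1 + ∑ k ∈ Finset.range n,
              (if ∀ j, 1 ≤ j → k + j ≤ n → M (k+j) ω ≠ M k ω then 1 else 0) : ℕ) : ℝ) := by
            exact_mod_cast h1
        _ = 1 + ∑ k ∈ Finset.range n,
              (if ∀ j, 1 ≤ j → k + j ≤ n → M (k+j) ω ≠ M k ω then (1:ℝ) else 0) := by
            push_cast; rfl
        _ = 1 + ∑ k ∈ Finset.range n, (S k).indicator (fun _ => (1:ℝ)) ω := by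
            congr 1
    rw [hf, hg]
    simp only
    rw [Finset.sum_sub_distrib]
    have h3 : (∑ k ∈ Finset.range n, (if ∀ j ≥ 1, M (k + j) ω ≠ M k ω then (1:ℝ) else 0))
        = ∑ k ∈ Finset.range n, (S' k).indicator (fun _ => (1:ℝ)) ω :=
      Finset.sum_congr rfl fun k _ => hiff k ω
    rw [h3]
    linarith [h2]
  -- integrability of g
  have hgint : Integrable g μ := by
    apply integrable_finset_sum
    intro k _
    exact ((integrable_const (1:ℝ)).indicator (measSet_S hmeas k n)).sub
      ((integrable_const (1:ℝ)).indicator (measSet_S' hmeas k))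
  -- main estimate on ∫ g
  have hgbd : ∫ ω, g ω ∂μ ≤ (C / ((θ-1) * (2-θ))) * (n:ℝ) ^ (2-θ) := by
    have hint : ∫ ω, g ω ∂μ = ∑ k ∈ Finset.range n,
        ((μ (S k)).toReal - (μ (S' k)).toReal) := by
      rw [hg, integral_finset_sum]
      · refine Finset.sum_congr rfl fun k _ => ?_
        rw [integral_sub ((integrable_const (1:ℝ)).indicator (measSet_S hmeas k n))
          ((integrable_const (1:ℝ)).indicator (measSet_S' hmeas k))]
        rw [integral_indicator_const (1:ℝ) (measSet_S hmeas k n),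
          integral_indicator_const (1:ℝ) (measSet_S' hmeas k)]
        simp
        rfl
      · intro k _
        exact ((integrable_const (1:ℝ)).indicator (measSet_S hmeas k n)).sub
          ((integrable_const (1:ℝ)).indicator (measSet_S' hmeas k))
    rw [hint]
    have hstep : ∑ k ∈ Finset.range n, ((μ (S k)).toReal - (μ (S' k)).toReal)
        ≤ ∑ k ∈ Finset.range n, (C/(θ-1)) * ((n-k : ℕ) : ℝ) ^ (1-θ) := by
      refine Finset.sum_le_sum fun k hk => ?_
      exact diff_bound μ M hmeas hM0 hstat θ C hθ1 hC hret (Finset.mem_range.mp hk)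
    refine hstep.trans ?_
    have hrefl : ∑ k ∈ Finset.range n, (C/(θ-1)) * ((n-k : ℕ) : ℝ) ^ (1-θ)
        = ∑ m ∈ Finset.range n, (C/(θ-1)) * ((m+1 : ℕ) : ℝ) ^ (1-θ) := by
      rw [← Finset.sum_range_reflect (fun m => (C/(θ-1)) * ((m+1 : ℕ) : ℝ) ^ (1-θ)) n]
      refine Finset.sum_congr rfl fun k hk => ?_
      have : n - 1 - k + 1 = n - k := by
        have := Finset.mem_range.mp hk; omega
      rw [this]
    rw [hrefl, ← Finset.mul_sum]
    have := sum_bound hθ1 hθ2 n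
    calc (C/(θ-1)) * ∑ m ∈ Finset.range n, ((m+1 : ℕ) : ℝ) ^ (1-θ)
        ≤ (C/(θ-1)) * (((n:ℝ) ^ (2-θ)) / (2-θ)) := by
          exact mul_le_mul_of_nonneg_left this (div_nonneg hC.le (by linarith))
      _ = (C / ((θ-1) * (2-θ))) * (n:ℝ) ^ (2-θ) := by
          field_simp
  -- conclude
  by_cases hfint : Integrable f μ
  · calc ∫ ω, f ω ∂μ ≤ ∫ ω, g ω ∂μ := integral_mono hfint hgint hfg
      _ ≤ _ := hgbd
  · rw [show (∫ ω, f ω ∂μ) = 0 from integral_undef hfint]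
    positivity
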